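/- Fix α < 0 and κ > 0, and let n₁ < n₂ be nonnegative integers with l(n₁, α) and l(n₂, α) both well-defined (where l(n, α) = θₙ coth(θₙ), θₙ = √(α + n²κ²) interpreted via cot for imaginary argument). Then the function β ↦ l(n₂, β) − l(n₁, β) is real-analytic and nonconstant on a neighborhood of α; in particular its zeros near α are isolated. -/

import Mathlib

open Real Filter Topology
open scoped Nat

/-- `l(n, β) = θₙ coth θₙ` as a function of the vorticity parameter `β`, with
`θₙ = √(β + n²κ²)`, interpreted via `cot` for imaginary `θₙ` and by `1` at `θₙ = 0`. -/
noncomputable def lfun (κ : ℝ) (n : ℕ) (β : ℝ) : ℝ :=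
  let t : ℝ := β + (n : ℝ) ^ 2 * κ ^ 2
  if 0 < t then Real.sqrt t * Real.cosh (Real.sqrt t) / Real.sinh (Real.sqrt t)
  else if t < 0 then Real.sqrt (-t) * Real.cos (Real.sqrt (-t)) / Real.sin (Real.sqrt (-t))
  else 1

noncomputable def Sfun (t : ℝ) : ℝ := ∑' k : ℕ, t ^ k / ((2 * k + 1)! : ℝ)
noncomputable def Cfun (t : ℝ) : ℝ := ∑' k : ℕ, t ^ k / ((2 * k)! : ℝ)


theorem Real.hasSum_cosh' (x : ℝ) : HasSum (fun n : ℕ => x ^ (2 * n) / ((2 * n)! : ℝ)) (Real.cosh x) := by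
  have h := Complex.hasSum_cos (x * Complex.I)
  rw [Complex.cos_mul_I] at h
  have e : (fun n : ℕ => (-1 : ℂ)^n * ((x:ℂ) * Complex.I) ^ (2*n) / ((2*n)! : ℂ)) = fun n : ℕ => ((x:ℂ)) ^ (2*n) / ((2*n)! : ℂ) := by
    funext n
    have hI : Complex.I ^ (2*n) = (-1:ℂ)^n := by rw [pow_mul, Complex.I_sq]
    rw [mul_pow, hI, show ((-1:ℂ)^n * ((x:ℂ)^(2*n) * (-1:ℂ)^n)) = ((-1:ℂ)*(-1))^n * (x:ℂ)^(2*n) by rw [mul_pow]; ring]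
    norm_num
  rw [e] at h
  exact_mod_cast h

theorem Real.hasSum_sinh' (x : ℝ) : HasSum (fun n : ℕ => x ^ (2 * n + 1) / ((2 * n + 1)! : ℝ)) (Real.sinh x) := by
  have h := Complex.hasSum_sin (x * Complex.I)
  rw [Complex.sin_mul_I] at h
  have h2 := h.mul_right (Complex.I)⁻¹
  rw [mul_assoc, Complex.mul_inv_cancel Complex.I_ne_zero, mul_one] at h2
  have e : (fun n : ℕ => (-1 : ℂ)^n * ((x:ℂ) * Complex.I) ^ (2*n+1) / ((2*n+1)! : ℂ) * (Complex.I)⁻¹) = fun n : ℕ => ((x:ℂ)) ^ (2*n+1) / ((2*n+1)! : ℂ) := by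
    funext n
    have hI : Complex.I ^ (2*n) = (-1:ℂ)^n := by rw [pow_mul, Complex.I_sq]
    rw [mul_pow, pow_succ, pow_succ, hI]
    have : ((-1:ℂ)^n * ((x:ℂ)^(2*n) * (x:ℂ) * ((-1:ℂ)^n * Complex.I))) = ((-1:ℂ)*(-1))^n * ((x:ℂ)^(2*n) * (x:ℂ)) * Complex.I := by
      rw [mul_pow]; ring
    rw [this]
    norm_num
    linear_combination (-((x:ℂ) ^ (2*n) * (x:ℂ) / ((2 * n + 1)! :ℂ))) * Complex.I_sq
  rw [e] at h2
  exact_mod_cast h2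



theorem hasSum_Cfun_nonneg {t : ℝ} (ht : 0 ≤ t) :
    HasSum (fun k : ℕ => t ^ k / ((2 * k)! : ℝ)) (Real.cosh (Real.sqrt t)) := by
  have h := Real.hasSum_cosh' (Real.sqrt t)
  simpa [pow_mul, Real.sq_sqrt ht] using h

theorem Cfun_of_nonneg {t : ℝ} (ht : 0 ≤ t) : Cfun t = Real.cosh (Real.sqrt t) :=
  (hasSum_Cfun_nonneg ht).tsum_eq

theorem hasSum_Sfun_pos {t : ℝ} (ht : 0 < t) :
    HasSum (fun k : ℕ => t ^ k / ((2 * k + 1)! : ℝ)) (Real.sinh (Real.sqrt t) / Real.sqrt t) := by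
  have hs : Real.sqrt t ≠ 0 := ne_of_gt (Real.sqrt_pos.2 ht)
  have h := (Real.hasSum_sinh' (Real.sqrt t)).div_const (Real.sqrt t)
  have e : (fun k : ℕ => Real.sqrt t ^ (2 * k + 1) / ((2 * k + 1)! : ℝ) / Real.sqrt t)
      = fun k : ℕ => t ^ k / ((2 * k + 1)! : ℝ) := by
    funext k
    rw [pow_succ, pow_mul, Real.sq_sqrt ht.le]
    field_simp
  rwa [e] at h

theorem Sfun_of_pos {t : ℝ} (ht : 0 < t) : Sfun t = Real.sinh (Real.sqrt t) / Real.sqrt t :=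
  (hasSum_Sfun_pos ht).tsum_eq

theorem hasSum_Cfun_nonpos {t : ℝ} (ht : t ≤ 0) :
    HasSum (fun k : ℕ => t ^ k / ((2 * k)! : ℝ)) (Real.cos (Real.sqrt (-t))) := by
  have h := Real.hasSum_cos (Real.sqrt (-t))
  have e : (fun k : ℕ => (-1 : ℝ) ^ k * Real.sqrt (-t) ^ (2 * k) / ((2 * k)! : ℝ))
      = fun k : ℕ => t ^ k / ((2 * k)! : ℝ) := by
    funext k
    rw [pow_mul, Real.sq_sqrt (by linarith), ← mul_pow]
    norm_num
  rwa [e] at h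

theorem Cfun_of_nonpos {t : ℝ} (ht : t ≤ 0) : Cfun t = Real.cos (Real.sqrt (-t)) :=
  (hasSum_Cfun_nonpos ht).tsum_eq

theorem hasSum_Sfun_neg {t : ℝ} (ht : t < 0) :
    HasSum (fun k : ℕ => t ^ k / ((2 * k + 1)! : ℝ)) (Real.sin (Real.sqrt (-t)) / Real.sqrt (-t)) := by
  have hs : Real.sqrt (-t) ≠ 0 := ne_of_gt (Real.sqrt_pos.2 (by linarith))
  have h := (Real.hasSum_sin (Real.sqrt (-t))).div_const (Real.sqrt (-t))
  have e : (fun k : ℕ => (-1 : ℝ) ^ k * Real.sqrt (-t) ^ (2 * k + 1) / ((2 * k + 1)! : ℝ) / Real.sqrt (-t))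
      = fun k : ℕ => t ^ k / ((2 * k + 1)! : ℝ) := by
    funext k
    rw [pow_succ, pow_mul, Real.sq_sqrt (by linarith : (0:ℝ) ≤ -t)]
    field_simp
    rw [← mul_pow]
    ring_nf
  rwa [e] at h

theorem Sfun_of_neg {t : ℝ} (ht : t < 0) : Sfun t = Real.sin (Real.sqrt (-t)) / Real.sqrt (-t) :=
  (hasSum_Sfun_neg ht).tsum_eq

theorem Sfun_zero : Sfun 0 = 1 := by
  rw [Sfun, tsum_eq_single 0 (by intro b hb; simp [zero_pow hb])]
  simp

theorem Cfun_zero : Cfun 0 = 1 := by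
  rw [Cfun, tsum_eq_single 0 (by intro b hb; simp [zero_pow hb])]
  simp

theorem analyticAt_factorialSeries (m : ℕ → ℕ) (hm : ∀ n, (n + 1) * (m n)! ≤ (m (n+1))!) (x : ℝ) :
    AnalyticAt ℝ (fun t : ℝ => ∑' k : ℕ, t ^ k / ((m k)! : ℝ)) x := by
  set c : ℕ → ℝ := fun k => (((m k)! : ℝ))⁻¹ with hc
  have hcne : ∀ n, c n ≠ 0 := fun n =>
    inv_ne_zero (by exact_mod_cast (Nat.factorial_pos (m n)).ne')
  have hratio : Tendsto (fun n : ℕ => ‖c n.succ‖ / ‖c n‖) atTop (𝓝 0) := by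
    have hb : ∀ n : ℕ, ‖c n.succ‖ / ‖c n‖ ≤ 1 / (n + 1 : ℝ) := by
      intro n
      have h1 : (0:ℝ) < ((m n)! : ℝ) := by exact_mod_cast Nat.factorial_pos (m n)
      have h2 : (0:ℝ) < ((m (n+1))! : ℝ) := by exact_mod_cast Nat.factorial_pos (m (n+1))
      have h3 : ((n:ℝ) + 1) * ((m n)! : ℝ) ≤ ((m (n+1))! : ℝ) := by exact_mod_cast hm n
      have he : ‖c n.succ‖ / ‖c n‖ = ((m n)! : ℝ) / ((m (n+1))! : ℝ) := by
        simp only [hc, norm_inv, Real.norm_natCast]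
        rw [div_eq_mul_inv, inv_inv, mul_comm, ← div_eq_mul_inv]
      rw [he, div_le_div_iff₀ h2 (by positivity)]
      nlinarith
    exact squeeze_zero (fun n => by positivity) hb
      tendsto_one_div_add_atTop_nhds_zero_nat
  have hr := FormalMultilinearSeries.ofScalars_radius_eq_top_of_tendsto ℝ c
    (Eventually.of_forall hcne) hratio
  have hball := (FormalMultilinearSeries.ofScalars ℝ c).hasFPowerSeriesOnBall (by simp [hr])
  have hA : AnalyticAt ℝ (FormalMultilinearSeries.ofScalars ℝ c).sum x :=
    hball.analyticAt_of_mem (by simp [hr])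
  have key : (fun t : ℝ => ∑' k : ℕ, t ^ k / ((m k)! : ℝ))
      = (FormalMultilinearSeries.ofScalars ℝ c).sum := by
    funext t
    rw [show (FormalMultilinearSeries.ofScalars ℝ c).sum t
        = FormalMultilinearSeries.ofScalarsSum c t from rfl,
      FormalMultilinearSeries.ofScalars_sum_eq]
    exact tsum_congr fun k => by rw [smul_eq_mul, div_eq_mul_inv, mul_comm]
  rw [key]
  exact hA

theorem analyticAt_Sfun (x : ℝ) : AnalyticAt ℝ (fun t : ℝ => ∑' k : ℕ, t ^ k / ((2 * k + 1)! : ℝ)) x := by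
  refine analyticAt_factorialSeries (fun k => 2 * k + 1) (fun n => ?_) x
  have h1 : (2 * (n+1) + 1)! = (2*n+3) * ((2*n+2) * (2*n+1)!) := by
    rw [show 2 * (n+1) + 1 = (2*n+2)+1 by ring, Nat.factorial_succ, show 2*n+2 = (2*n+1)+1 by ring,
      Nat.factorial_succ]
  rw [h1]
  have : (n+1) ≤ (2*n+3) * (2*n+2) := by nlinarith
  calc (n + 1) * (2*n+1)! ≤ ((2*n+3) * (2*n+2)) * (2*n+1)! := Nat.mul_le_mul_right _ this
    _ = (2*n+3) * ((2*n+2) * (2*n+1)!) := by ring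

theorem analyticAt_Cfun (x : ℝ) : AnalyticAt ℝ (fun t : ℝ => ∑' k : ℕ, t ^ k / ((2 * k)! : ℝ)) x := by
  refine analyticAt_factorialSeries (fun k => 2 * k) (fun n => ?_) x
  have h1 : (2 * (n+1))! = (2*n+2) * ((2*n+1) * (2*n)!) := by
    rw [show 2 * (n+1) = (2*n+1)+1 by ring, Nat.factorial_succ, show 2*n+1 = (2*n)+1 by rfl,
      Nat.factorial_succ]
  rw [h1]
  have : (n+1) ≤ (2*n+2) * (2*n+1) := by nlinarith
  calc (n + 1) * (2*n)! ≤ ((2*n+2) * (2*n+1)) * (2*n)! := Nat.mul_le_mul_right _ this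
    _ = (2*n+2) * ((2*n+1) * (2*n)!) := by ring

theorem analyticAt_Sfun' (x : ℝ) : AnalyticAt ℝ Sfun x := analyticAt_Sfun x
theorem analyticAt_Cfun' (x : ℝ) : AnalyticAt ℝ Cfun x := analyticAt_Cfun x

theorem Sfun_ne_zero_of_pos {t : ℝ} (ht : 0 < t) : Sfun t ≠ 0 := by
  rw [Sfun_of_pos ht]
  have h1 : 0 < Real.sqrt t := Real.sqrt_pos.2 ht
  have h2 : 0 < Real.sinh (Real.sqrt t) := by rwa [Real.sinh_pos_iff]
  positivity

theorem Sfun_ne_zero_zero : Sfun 0 ≠ 0 := by rw [Sfun_zero]; norm_num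

theorem sin_ne_zero_of_Sfun {t : ℝ} (ht : t < 0) (hS : Sfun t ≠ 0) :
    Real.sin (Real.sqrt (-t)) ≠ 0 := by
  rw [Sfun_of_neg ht] at hS
  intro h
  rw [h] at hS
  simp at hS

theorem Sfun_ne_zero_of_neg {t : ℝ} (ht : t < 0) (hsin : Real.sin (Real.sqrt (-t)) ≠ 0) :
    Sfun t ≠ 0 := by
  rw [Sfun_of_neg ht]
  have h1 : 0 < Real.sqrt (-t) := Real.sqrt_pos.2 (by linarith)
  exact div_ne_zero hsin (ne_of_gt h1)

theorem lfun_eq_div (κ : ℝ) (n : ℕ) (β : ℝ) (hS : Sfun (β + (n:ℝ)^2*κ^2) ≠ 0) :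
    lfun κ n β = Cfun (β + (n:ℝ)^2*κ^2) / Sfun (β + (n:ℝ)^2*κ^2) := by
  set t := β + (n:ℝ)^2*κ^2 with htdef
  rcases lt_trichotomy t 0 with hneg | hzero | hpos
  · have hsin := sin_ne_zero_of_Sfun hneg hS
    have hx : 0 < Real.sqrt (-t) := Real.sqrt_pos.2 (by linarith)
    rw [lfun]
    simp only [← htdef, if_neg (not_lt.2 hneg.le), if_pos hneg]
    rw [Cfun_of_nonpos hneg.le, Sfun_of_neg hneg]
    field_simp
  · rw [lfun]
    simp only [← htdef, hzero, lt_irrefl, if_false, if_neg (lt_irrefl (0:ℝ))]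
    rw [Cfun_zero, Sfun_zero]
    norm_num
  · have hx : 0 < Real.sqrt t := Real.sqrt_pos.2 hpos
    have hsh : Real.sinh (Real.sqrt t) ≠ 0 := ne_of_gt (by rwa [Real.sinh_pos_iff])
    rw [lfun]
    simp only [← htdef, if_pos hpos]
    rw [Cfun_of_nonneg hpos.le, Sfun_of_pos hpos]
    field_simp

/-- algebraic identity, positive case -/
theorem aux_id_pos (x s ch : ℝ) (hx : x ≠ 0) (hs : s ≠ 0) (hch : ch^2 = s^2+1) :
    2 * x^2 * (((1/(2*x)*ch + x*(s*(1/(2*x))))*s - (x*ch)*(ch*(1/(2*x))))/s^2)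
      = x*ch/s + x^2 - (x*ch/s)^2 := by
  field_simp

theorem lfun_hasDerivAt (κ : ℝ) (n : ℕ) (β : ℝ) (ht : β + (n:ℝ)^2*κ^2 ≠ 0)
    (hS : Sfun (β + (n:ℝ)^2*κ^2) ≠ 0) :
    ∃ y : ℝ, HasDerivAt (lfun κ n) y β ∧
      2 * (β + (n:ℝ)^2*κ^2) * y
        = lfun κ n β + (β + (n:ℝ)^2*κ^2) - (lfun κ n β)^2 := by
  set cn := (n:ℝ)^2*κ^2 with hcn
  set t := β + cn with htdef
  have hu : HasDerivAt (fun b : ℝ => b + cn) 1 β := by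
    simpa using (hasDerivAt_id β).add_const cn
  rcases ht.lt_or_gt with hneg | hpos
  · -- t < 0 : oscillatory branch
    have hxpos : 0 < Real.sqrt (-t) := Real.sqrt_pos.2 (by linarith)
    have hsin : Real.sin (Real.sqrt (-t)) ≠ 0 := sin_ne_zero_of_Sfun hneg hS
    set x := Real.sqrt (-t) with hxdef
    have hneg' : HasDerivAt (fun b : ℝ => -(b + cn)) (-1) β := hu.neg
    have hsq : HasDerivAt (fun b : ℝ => Real.sqrt (-(b + cn))) (1/(2*x) * (-1)) β :=
      (Real.hasDerivAt_sqrt (neg_ne_zero.mpr ht)).comp β hneg'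
    have hcosp : HasDerivAt (fun b : ℝ => Real.cos (Real.sqrt (-(b + cn))))
        (-Real.sin x * (1/(2*x) * (-1))) β := by have := (Real.hasDerivAt_cos x).comp β hsq; exact this
    have hnum : HasDerivAt (fun b : ℝ => Real.sqrt (-(b + cn)) * Real.cos (Real.sqrt (-(b + cn))))
        ((1/(2*x) * (-1)) * Real.cos x + x * (-Real.sin x * (1/(2*x) * (-1)))) β := hsq.mul hcosp
    have hden : HasDerivAt (fun b : ℝ => Real.sin (Real.sqrt (-(b + cn))))
        (Real.cos x * (1/(2*x) * (-1))) β := by have := (Real.hasDerivAt_sin x).comp β hsq; exact this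
    have hg : HasDerivAt (fun b : ℝ => Real.sqrt (-(b + cn)) * Real.cos (Real.sqrt (-(b + cn)))
          / Real.sin (Real.sqrt (-(b + cn))))
        ((((1/(2*x) * (-1)) * Real.cos x + x * (-Real.sin x * (1/(2*x) * (-1)))) * Real.sin x
          - (x * Real.cos x) * (Real.cos x * (1/(2*x) * (-1)))) / (Real.sin x)^2) β :=
      hnum.div hden hsin
    have hev : lfun κ n =ᶠ[𝓝 β] fun b : ℝ => Real.sqrt (-(b + cn)) * Real.cos (Real.sqrt (-(b + cn)))
          / Real.sin (Real.sqrt (-(b + cn))) := by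
      have hopen : IsOpen {b : ℝ | b + cn < 0} := isOpen_lt (by continuity) continuous_const
      filter_upwards [hopen.mem_nhds (by simpa using hneg)] with b hb
      simp only [hcn] at hb ⊢
      rw [lfun]
      simp only [if_neg (not_lt.2 (le_of_lt hb)), if_pos hb]
    have hlf := hg.congr_of_eventuallyEq hev
    refine ⟨_, hlf, ?_⟩
    have hval : lfun κ n β = x * Real.cos x / Real.sin x := by
      rw [lfun]
      simp only [← hcn, ← htdef, if_neg (not_lt.2 hneg.le), if_pos hneg, hxdef]
    rw [hval]
    have hx2 : x^2 = -t := Real.sq_sqrt (by linarith)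
    have hc2 : (Real.cos x)^2 = 1 - (Real.sin x)^2 := by
      have := Real.sin_sq_add_cos_sq x; linarith
    have hxne : x ≠ 0 := ne_of_gt hxpos
    rw [show t = -x^2 by rw [hx2]; ring]
    field_simp
    ring_nf
  · -- 0 < t : hyperbolic branch
    have hxpos : 0 < Real.sqrt t := Real.sqrt_pos.2 hpos
    have hsh : Real.sinh (Real.sqrt t) ≠ 0 := ne_of_gt (by rwa [Real.sinh_pos_iff])
    set x := Real.sqrt t with hxdef
    have hsq : HasDerivAt (fun b : ℝ => Real.sqrt (b + cn)) (1/(2*x) * 1) β :=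
      (Real.hasDerivAt_sqrt ht).comp β hu
    have hch : HasDerivAt (fun b : ℝ => Real.cosh (Real.sqrt (b + cn)))
        (Real.sinh x * (1/(2*x) * 1)) β := by have := (Real.hasDerivAt_cosh x).comp β hsq; exact this
    have hnum : HasDerivAt (fun b : ℝ => Real.sqrt (b + cn) * Real.cosh (Real.sqrt (b + cn)))
        ((1/(2*x) * 1) * Real.cosh x + x * (Real.sinh x * (1/(2*x) * 1))) β := hsq.mul hch
    have hden : HasDerivAt (fun b : ℝ => Real.sinh (Real.sqrt (b + cn)))
        (Real.cosh x * (1/(2*x) * 1)) β := by have := (Real.hasDerivAt_sinh x).comp β hsq; exact this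
    have hg : HasDerivAt (fun b : ℝ => Real.sqrt (b + cn) * Real.cosh (Real.sqrt (b + cn))
          / Real.sinh (Real.sqrt (b + cn)))
        ((((1/(2*x) * 1) * Real.cosh x + x * (Real.sinh x * (1/(2*x) * 1))) * Real.sinh x
          - (x * Real.cosh x) * (Real.cosh x * (1/(2*x) * 1))) / (Real.sinh x)^2) β :=
      hnum.div hden hsh
    have hev : lfun κ n =ᶠ[𝓝 β] fun b : ℝ => Real.sqrt (b + cn) * Real.cosh (Real.sqrt (b + cn))
          / Real.sinh (Real.sqrt (b + cn)) := by
      have hopen : IsOpen {b : ℝ | 0 < b + cn} := isOpen_lt continuous_const (by continuity)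
      filter_upwards [hopen.mem_nhds (by simpa using hpos)] with b hb
      simp only [hcn] at hb ⊢
      rw [lfun]
      simp only [if_pos hb]
    have hlf := hg.congr_of_eventuallyEq hev
    refine ⟨_, hlf, ?_⟩
    have hval : lfun κ n β = x * Real.cosh x / Real.sinh x := by
      rw [lfun]
      simp only [← hcn, ← htdef, if_pos hpos, hxdef]
    rw [hval]
    have hx2 : x^2 = t := Real.sq_sqrt hpos.le
    have hc2 : (Real.cosh x)^2 = (Real.sinh x)^2 + 1 := Real.cosh_sq x
    have hxne : x ≠ 0 := ne_of_gt hxpos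
    rw [show t = x^2 from hx2.symm]
    field_simp

/-- Core nonconstancy: if the difference is constant on an open set avoiding the
singular points, we get a contradiction. -/
theorem nonconst_core (κ : ℝ) (n₁ n₂ : ℕ) (c₁ c₂ d c : ℝ)
    (hc₁ : c₁ = (n₁:ℝ)^2*κ^2) (hc₂ : c₂ = (n₂:ℝ)^2*κ^2) (hd : d = c₂ - c₁) (hd0 : d ≠ 0)
    (U : Set ℝ) (hUopen : IsOpen U) (hUne : U.Nonempty) (hUinf : U.Infinite)
    (hU1 : ∀ β ∈ U, β + c₁ ≠ 0) (hU2 : ∀ β ∈ U, β + c₂ ≠ 0)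
    (hS1 : ∀ β ∈ U, Sfun (β + c₁) ≠ 0) (hS2 : ∀ β ∈ U, Sfun (β + c₂) ≠ 0)
    (hconst : ∀ β ∈ U, lfun κ n₂ β - lfun κ n₁ β = c) : False := by
  set L : ℝ → ℝ := lfun κ n₁ with hLdef
  -- canonical derivative facts
  have hder : ∀ β ∈ U, HasDerivAt L (deriv L β) β ∧
      2*(β+c₁)*(deriv L β) = L β + (β+c₁) - (L β)^2 := by
    intro β hβ
    obtain ⟨y, h1, h2⟩ := lfun_hasDerivAt κ n₁ β (by rw [← hc₁]; exact hU1 β hβ)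
      (by rw [← hc₁]; exact hS1 β hβ)
    have hy : deriv L β = y := h1.deriv
    rw [hc₁] at *
    exact ⟨hy ▸ h1, by rw [hy]; linarith [h2]⟩
  -- the first algebraic relation E1
  have hE1 : ∀ β ∈ U, d*(L β) - d*(L β)^2 + c*(β+c₁)*(2*(L β) + c - 1) = 0 := by
    intro β hβ
    obtain ⟨_, hode1⟩ := hder β hβ
    obtain ⟨y2, hG, hode2⟩ := lfun_hasDerivAt κ n₂ β (by rw [← hc₂]; exact hU2 β hβ)
      (by rw [← hc₂]; exact hS2 β hβ)
    -- lfun κ n₂ = L + c near β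
    have hev : (fun b => L b + c) =ᶠ[𝓝 β] lfun κ n₂ := by
      filter_upwards [hUopen.mem_nhds hβ] with b hb
      have := hconst b hb
      simp only [hLdef]
      linarith
    have hG2 : HasDerivAt (fun b => L b + c) y2 β := hG.congr_of_eventuallyEq hev
    have hG3 : HasDerivAt (fun b => L b + c) (deriv L β) β := (hder β hβ).1.add_const c
    have hy2 : y2 = deriv L β := hG2.unique hG3
    have hval : lfun κ n₂ β = L β + c := by
      have := hconst β hβ; simp only [hLdef]; linarith
    rw [hy2, hval] at hode2
    linear_combination (-(β + c₁ + d))*hode1 + (β + c₁)*hode2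
      + ((β + c₁)*(2*(deriv L β) - 1))*hc₂ + ((β + c₁)*(2*(deriv L β) - 1))*hd
  -- level-2 relation obtained by differentiating E1 and eliminating via the ODE
  have hE2 : ∀ β ∈ U, ((-2*d^3 + 4*c*d^2 + 2*c^2*d^2)*(β+c₁) + (4*c^2*d)*(β+c₁)^2) * L β
      + ((d^3 - c*d^2 + c^2*d^2)*(β+c₁) + (2*c*d^2 - 2*c^2*d + 2*c^3*d)*(β+c₁)^2) = 0 := by
    intro β hβ
    obtain ⟨hL, hode1⟩ := hder β hβ
    have h0 : HasDerivAt (fun b => d * L b - d * L b ^ 2 + c * (b + c₁) * (2 * L b + (c - 1)))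
        0 β := by
      refine (hasDerivAt_const β 0).congr_of_eventuallyEq ?_
      filter_upwards [hUopen.mem_nhds hβ] with b hb
      linear_combination hE1 b hb
    have hd1 := ((hL.const_mul d).sub ((hL.pow 2).const_mul d)).add
      (((((hasDerivAt_id β).add_const c₁)).const_mul c).mul ((hL.const_mul 2).add_const (c-1)))
    have hu1 := hd1.unique h0
    simp only [id_eq] at hu1
    linear_combination (2*(β+c₁)*d^2)*hu1 - (d^2*(d - 2*d*(L β) + 2*c*(β+c₁)))*hode1
      - (d^2 - 2*(L β)*d^2 - 2*(β+c₁)*c*d)*(hE1 β hβ)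
  -- level-3 relation
  have hE3 : ∀ β ∈ U, ((-4*d^4 + 8*c*d^3 + 4*c^2*d^3)*(β+c₁) + (4*c*d^3 + 8*c^2*d^2 - 4*c^3*d^2)*(β+c₁)^2
        - 8*c^3*d*(β+c₁)^3) * L β
      + ((2*d^4 - 2*c*d^3 + 2*c^2*d^3)*(β+c₁)
        + (-2*d^4 + 10*c*d^3 - 4*c^2*d^2 + 4*c^2*d^3 + 6*c^3*d^2 - 2*c^4*d^2)*(β+c₁)^2
        + (4*c^2*d^2 + 4*c^3*d - 4*c^4*d)*(β+c₁)^3) = 0 := by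
    intro β hβ
    obtain ⟨hL, hode1⟩ := hder β hβ
    have h0 : HasDerivAt (fun b =>
        ((-2*d^3 + 4*c*d^2 + 2*c^2*d^2) * (b + c₁) + (4*c^2*d) * (b + c₁)^2) * L b
          + ((d^3 - c*d^2 + c^2*d^2) * (b + c₁) + (2*c*d^2 - 2*c^2*d + 2*c^3*d) * (b + c₁)^2))
        0 β := by
      refine (hasDerivAt_const β 0).congr_of_eventuallyEq ?_
      filter_upwards [hUopen.mem_nhds hβ] with b hb
      linear_combination hE2 b hb
    have hb1 : HasDerivAt (fun b : ℝ => b + c₁) 1 β := (hasDerivAt_id β).add_const c₁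
    have hd2 := (((hb1.const_mul (-2*d^3 + 4*c*d^2 + 2*c^2*d^2)).add
        ((hb1.pow 2).const_mul (4*c^2*d))).mul hL).add
      ((hb1.const_mul (d^3 - c*d^2 + c^2*d^2)).add
        ((hb1.pow 2).const_mul (2*c*d^2 - 2*c^2*d + 2*c^3*d)))
    have hu2 := hd2.unique h0
    simp only [Pi.add_apply, Pi.pow_apply] at hu2
    linear_combination (2*(β+c₁)*d)*hu2
      - (d*((-2*d^3 + 4*c*d^2 + 2*c^2*d^2)*(β+c₁) + (4*c^2*d)*(β+c₁)^2))*hode1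
      - ((-2*d^3 + 4*c*d^2 + 2*c^2*d^2)*(β+c₁) + (4*c^2*d)*(β+c₁)^2)*(hE1 β hβ)
  -- the resulting polynomial identity in t = β + c₁
  have hP : ∀ β ∈ U,
      (4*d^7 - 24*c*d^6 + 28*c^2*d^5 - 12*c^2*d^6 + 24*c^3*d^5 + 4*c^4*d^4 + 12*c^4*d^5 - 4*c^6*d^4)*(β+c₁)^3
      + (-24*c^2*d^5 + 48*c^3*d^4 + 8*c^4*d^3 + 32*c^4*d^4 - 8*c^6*d^3)*(β+c₁)^4
      + (32*c^4*d^3)*(β+c₁)^5 = 0 := by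
    intro β hβ
    linear_combination ((-2*d^3 + 4*c*d^2 + 2*c^2*d^2)*(β+c₁) + (4*c^2*d)*(β+c₁)^2)*(hE3 β hβ)
      - ((-4*d^4 + 8*c*d^3 + 4*c^2*d^3)*(β+c₁) + (4*c*d^3 + 8*c^2*d^2 - 4*c^3*d^2)*(β+c₁)^2
        - 8*c^3*d*(β+c₁)^3)*(hE2 β hβ)
  -- polynomial vanishing on an infinite set forces c = 0
  have hc0 : c = 0 := by
    set a3 : ℝ := 4*d^7 - 24*c*d^6 + 28*c^2*d^5 - 12*c^2*d^6 + 24*c^3*d^5 + 4*c^4*d^4 + 12*c^4*d^5 - 4*c^6*d^4 with ha3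
    set a4 : ℝ := -24*c^2*d^5 + 48*c^3*d^4 + 8*c^4*d^3 + 32*c^4*d^4 - 8*c^6*d^3 with ha4
    set a5 : ℝ := 32*c^4*d^3 with ha5
    set p : Polynomial ℝ := Polynomial.C a3 * Polynomial.X^3 + Polynomial.C a4 * Polynomial.X^4
      + Polynomial.C a5 * Polynomial.X^5 with hp
    have hroot : ((fun β => β + c₁) '' U) ⊆ {x | p.IsRoot x} := by
      rintro x ⟨β, hβ, rfl⟩
      have := hP β hβ
      simp only [Polynomial.IsRoot, hp, Polynomial.eval_add, Polynomial.eval_mul,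
        Polynomial.eval_C, Polynomial.eval_pow, Polynomial.eval_X, Set.mem_setOf_eq]
      linear_combination this
    have hinj : Set.InjOn (fun β => β + c₁) U := fun a _ b _ h => by
      simpa using h
    have hinf : Set.Infinite {x | p.IsRoot x} := (hUinf.image hinj).mono hroot
    have hp0 : p = 0 := p.eq_zero_of_infinite_isRoot hinf
    have h5 : a5 = 0 := by
      have := congrArg (fun q : Polynomial ℝ => q.coeff 5) hp0
      simpa [hp, Polynomial.coeff_add, Polynomial.coeff_C_mul, Polynomial.coeff_X_pow] using this
    have hc4 : c^4 = 0 := by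
      have hd3 : d^3 ≠ 0 := pow_ne_zero _ hd0
      have : (32:ℝ) * c^4 * d^3 = 0 := by linarith [h5]
      rcases mul_eq_zero.1 this with h | h
      · rcases mul_eq_zero.1 h with h' | h'
        · norm_num at h'
        · exact h'
      · exact absurd h hd3
    exact pow_eq_zero_iff (by norm_num) |>.1 hc4
  -- with c = 0 : L² = L on U , yet the ODE forces L' = 1/2 , contradiction
  obtain ⟨β₀, hβ₀⟩ := hUne
  have ht0 : β₀ + c₁ ≠ 0 := hU1 β₀ hβ₀
  have hsq : ∀ b ∈ U, L b ^ 2 - L b = 0 := by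
    intro b hb
    have h := hE1 b hb
    rw [hc0] at h
    have h' : d * (L b - L b^2) = 0 := by linear_combination h
    rcases mul_eq_zero.1 h' with h'' | h''
    · exact absurd h'' hd0
    · linarith
  obtain ⟨hL, hode1⟩ := hder β₀ hβ₀
  have h0 : HasDerivAt (fun b => L b ^ 2 - L b) 0 β₀ := by
    refine (hasDerivAt_const β₀ 0).congr_of_eventuallyEq ?_
    filter_upwards [hUopen.mem_nhds hβ₀] with b hb
    exact hsq b hb
  have hdq := (hL.pow 2).sub hL
  have hu := hdq.unique h0
  -- hu : 2 * L β₀ ^ 1 * y - y = 0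
  have hyy : deriv L β₀ = 1/2 := by
    have h1 : 2 * (β₀ + c₁) * deriv L β₀ = (β₀ + c₁) := by
      have := hsq β₀ hβ₀
      linarith [hode1]
    have h2 : (2 * deriv L β₀ - 1) * (β₀ + c₁) = 0 := by linear_combination h1
    rcases mul_eq_zero.1 h2 with h | h
    · linarith
    · exact absurd h ht0
  have hLval : L β₀ = 1/2 := by
    rw [hyy] at hu
    push_cast at hu
    nlinarith [hu]
  have := hsq β₀ hβ₀
  rw [hLval] at this
  norm_num at this

/-- For `n₁ < n₂` with `l(n₁, ·)`, `l(n₂, ·)` well-defined at `α`, the difference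
`β ↦ l(n₂, β) − l(n₁, β)` is real-analytic and nonconstant near `α`; in particular its
zeros near `α` are isolated. -/
theorem stmt_9 (κ α : ℝ) (hκ : 0 < κ) (hα : α < 0) (n₁ n₂ : ℕ) (hn : n₁ < n₂)
    (hwd : ∀ n ∈ ({n₁, n₂} : Set ℕ), α + (n : ℝ) ^ 2 * κ ^ 2 < 0 →
      Real.sin (Real.sqrt (-(α + (n : ℝ) ^ 2 * κ ^ 2))) ≠ 0) :
    ∃ ε > 0,
      AnalyticOnNhd ℝ (fun β => lfun κ n₂ β - lfun κ n₁ β) (Metric.ball α ε) ∧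
      (∃ β ∈ Metric.ball α ε, lfun κ n₂ β - lfun κ n₁ β ≠ lfun κ n₂ α - lfun κ n₁ α) ∧
      ∀ β₀ ∈ Metric.ball α ε, lfun κ n₂ β₀ - lfun κ n₁ β₀ = 0 →
        ∃ δ > 0, ∀ β : ℝ, β ≠ β₀ → |β - β₀| < δ → lfun κ n₂ β - lfun κ n₁ β ≠ 0 := by
  have hSne : ∀ n ∈ ({n₁, n₂} : Set ℕ), Sfun (α + (n:ℝ)^2*κ^2) ≠ 0 := by
    intro n hn'
    rcases lt_trichotomy (α + (n:ℝ)^2*κ^2) 0 with h | h | h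
    · exact Sfun_ne_zero_of_neg h (hwd n hn' h)
    · rw [h]; exact Sfun_ne_zero_zero
    · exact Sfun_ne_zero_of_pos h
  -- continuity of Sfun
  have hScont : Continuous Sfun := by
    rw [continuous_iff_continuousAt]
    exact fun x => (analyticAt_Sfun' x).continuousAt
  set c₁ : ℝ := (n₁:ℝ)^2*κ^2 with hc₁
  set c₂ : ℝ := (n₂:ℝ)^2*κ^2 with hc₂
  have hc12 : c₁ < c₂ := by
    have h1 : (n₁:ℝ) < (n₂:ℝ) := by exact_mod_cast hn
    have h2 : (0:ℝ) ≤ (n₁:ℝ) := Nat.cast_nonneg n₁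
    have : (n₁:ℝ)^2 < (n₂:ℝ)^2 := by nlinarith
    rw [hc₁, hc₂]
    nlinarith [sq_nonneg κ, pow_pos hκ 2]
  set V : Set ℝ := ((fun β : ℝ => Sfun (β + c₁)) ⁻¹' {(0:ℝ)}ᶜ) ∩ ((fun β : ℝ => Sfun (β + c₂)) ⁻¹' {(0:ℝ)}ᶜ) with hV
  have hVopen : IsOpen V := by
    refine IsOpen.inter ?_ ?_ <;>
      exact isOpen_compl_singleton.preimage (hScont.comp (continuous_id.add continuous_const))
  have hVmem : ∀ b ∈ V, Sfun (b + c₁) ≠ 0 ∧ Sfun (b + c₂) ≠ 0 := by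
    intro b hb
    constructor
    · simpa using hb.1
    · simpa using hb.2
  have hαV : α ∈ V := by
    constructor
    · simpa using hSne n₁ (Set.mem_insert _ _)
    · simpa using hSne n₂ (Set.mem_insert_of_mem _ rfl)
  obtain ⟨ε, hε, hball⟩ := Metric.isOpen_iff.1 hVopen α hαV
  -- (1) analyticity on the ball
  have hana : AnalyticOnNhd ℝ (fun β => lfun κ n₂ β - lfun κ n₁ β) (Metric.ball α ε) := by
    intro β hβ
    have hb := hVmem β (hball hβ)
    have haff : ∀ cc : ℝ, AnalyticAt ℝ (fun b : ℝ => b + cc) β :=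
      fun cc => (analyticAt_id).add analyticAt_const
    have h2 : AnalyticAt ℝ (fun b => Cfun (b + c₂) / Sfun (b + c₂)
        - Cfun (b + c₁) / Sfun (b + c₁)) β := by
      refine AnalyticAt.sub (AnalyticAt.div ?_ ?_ hb.2) (AnalyticAt.div ?_ ?_ hb.1)
      · simpa [Function.comp_def] using AnalyticAt.comp (f := fun b : ℝ => b + c₂) (x := β) (analyticAt_Cfun' (β + c₂)) (haff c₂)
      · simpa [Function.comp_def] using AnalyticAt.comp (f := fun b : ℝ => b + c₂) (x := β) (analyticAt_Sfun' (β + c₂)) (haff c₂)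
      · simpa [Function.comp_def] using AnalyticAt.comp (f := fun b : ℝ => b + c₁) (x := β) (analyticAt_Cfun' (β + c₁)) (haff c₁)
      · simpa [Function.comp_def] using AnalyticAt.comp (f := fun b : ℝ => b + c₁) (x := β) (analyticAt_Sfun' (β + c₁)) (haff c₁)
    refine h2.congr ?_
    filter_upwards [Metric.isOpen_ball.mem_nhds hβ] with b hbmem
    have hbV := hVmem b (hball hbmem)
    rw [lfun_eq_div κ n₂ b (by rw [← hc₂]; exact hbV.2), lfun_eq_div κ n₁ b (by rw [← hc₁]; exact hbV.1)]
  -- (2) nonconstancy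
  have hwit : ∃ β ∈ Metric.ball α ε, lfun κ n₂ β - lfun κ n₁ β ≠ lfun κ n₂ α - lfun κ n₁ α := by
    by_contra hcon
    push_neg at hcon
    set U : Set ℝ := Metric.ball α ε \ {-c₁, -c₂} with hU
    have hUopen : IsOpen U := Metric.isOpen_ball.sdiff (Set.Finite.isClosed (by
      exact (Set.finite_singleton _).insert _))
    have hUinf : U.Infinite := by
      have : (Metric.ball α ε).Infinite := by
        rw [Real.ball_eq_Ioo]
        exact Set.Ioo_infinite (by linarith)
      exact this.diff ((Set.finite_singleton _).insert _)
    have hmem : ∀ β ∈ U, β ∈ Metric.ball α ε ∧ β + c₁ ≠ 0 ∧ β + c₂ ≠ 0 := by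
      intro β hβ
      have h2 := hβ.2
      simp only [Set.mem_insert_iff, Set.mem_singleton_iff, not_or] at h2
      exact ⟨hβ.1, fun h => h2.1 (by linarith), fun h => h2.2 (by linarith)⟩
    exact nonconst_core κ n₁ n₂ c₁ c₂ (c₂ - c₁) (lfun κ n₂ α - lfun κ n₁ α) hc₁ hc₂ rfl
      (by linarith) U hUopen hUinf.nonempty hUinf
      (fun β hβ => (hmem β hβ).2.1) (fun β hβ => (hmem β hβ).2.2)
      (fun β hβ => (hVmem β (hball (hmem β hβ).1)).1) (fun β hβ => (hVmem β (hball (hmem β hβ).1)).2)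
      (fun β hβ => hcon β (hmem β hβ).1)
  refine ⟨ε, hε, hana, hwit, ?_⟩
  -- (3) isolated zeros
  intro β₀ hβ₀ hzero
  rcases (hana β₀ hβ₀).eventually_eq_zero_or_eventually_ne_zero with hcase | hcase
  · exfalso
    obtain ⟨βs, hβs, hne⟩ := hwit
    have heq : Set.EqOn (fun β => lfun κ n₂ β - lfun κ n₁ β) 0 (Metric.ball α ε) :=
      hana.eqOn_zero_of_preconnected_of_eventuallyEq_zero
        (convex_ball α ε).isPreconnected hβ₀ hcase
    have h1 := heq hβs
    have h2 := heq (Metric.mem_ball_self hε)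
    simp only [Pi.zero_apply] at h1 h2
    exact hne (by rw [h1, h2])
  · have := eventually_nhdsWithin_iff.1 hcase
    rw [Metric.eventually_nhds_iff] at this
    obtain ⟨δ, hδ, hd⟩ := this
    refine ⟨δ, hδ, fun β hβne hβd => ?_⟩
    exact hd (show dist β β₀ < δ by rwa [Real.dist_eq]) (by simpa using hβne)
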